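/- Let F be a field, G=(V,E) a finite graph, X ⊆ V a vertex cover of G, and d a positive integer. Suppose F^d contains no nonzero self-orthogonal vector. Let K be the graph with vertex set X ∪ {v_S : S ∈ 𝒮}, where 𝒮 is the collection of sets S ⊆ X with |S| = d such that S ⊆ N_G(v) for some v ∈ V∖X, with edges those of G[X] together with edges from each v_S to all vertices of S. Then od_F(G) ≤ d if and only if od_F(K) ≤ d. -/

import Mathlib

open Module

/-- The standard dot-product bilinear form on `Fin d → F`. -/
noncomputable def stdB (F : Type*) [Field F] (d : ℕ) :
    LinearMap.BilinForm F (Fin d → F) :=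
  LinearMap.mk₂ F (fun x y => ∑ t, x t * y t)
    (fun x x' y => by simp [add_mul, Finset.sum_add_distrib])
    (fun c x y => by simp [Finset.mul_sum, mul_assoc])
    (fun x y y' => by simp [mul_add, Finset.sum_add_distrib])
    (fun c x y => by simp [Finset.mul_sum, mul_left_comm])

lemma stdB_apply {F : Type*} [Field F] {d : ℕ} (x y : Fin d → F) :
    stdB F d x y = ∑ t, x t * y t := rfl

lemma stdB_refl {F : Type*} [Field F] {d : ℕ} : (stdB F d).IsRefl := by
  intro x y h
  rw [stdB_apply] at h ⊢
  rw [← h]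
  exact Finset.sum_congr rfl fun t _ => mul_comm _ _

lemma aux_exists {F : Type*} [Field F] {d : ℕ}
    (hF : ∀ x : Fin d → F, ∑ t, x t * x t = 0 → x = 0)
    (s : Set (Fin d → F)) (hs : Submodule.span F s ≠ ⊤) :
    ∃ z : Fin d → F, (∑ t, z t * z t ≠ 0) ∧ ∀ p ∈ s, ∑ t, p t * z t = 0 := by
  have hnd : (stdB F d).Nondegenerate :=
    ⟨fun m hm => hF m (hm m), fun m hm => hF m (hm m)⟩
  have hlt : finrank F (Submodule.span F s) < d := by
    have := Submodule.finrank_lt (K := F) (V := Fin d → F)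
      hs
    simpa [Module.finrank_fin_fun] using this
  have horth : 0 < finrank F ((stdB F d).orthogonal (Submodule.span F s)) := by
    rw [LinearMap.BilinForm.finrank_orthogonal hnd, Module.finrank_fin_fun]
    omega
  have hne : (stdB F d).orthogonal (Submodule.span F s) ≠ ⊥ := by
    intro h
    rw [h] at horth
    simp at horth
  obtain ⟨z, hz, hz0⟩ := Submodule.exists_mem_ne_zero_of_ne_bot hne
  refine ⟨z, fun h => hz0 (hF z h), fun p hp => hz p (Submodule.subset_span hp)⟩

/-- od_F(G) ≤ d iff od_F(K) ≤ d, where K = K(G,X,d,d) is built from G[X]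
by adding, for each d-subset S of X contained in the neighborhood of some vertex
outside X, a new vertex v_S adjacent exactly to S. (F^d has no nonzero self-orthogonal
vectors.) -/
theorem stmt_16 (F : Type*) [Field F] (V : Type*) [Fintype V] [DecidableEq V]
    (G : SimpleGraph V) (X : Finset V)
    (hcover : ∀ v w, G.Adj v w → v ∈ X ∨ w ∈ X)
    (d : ℕ) (hd : 1 ≤ d)
    (hF : ∀ x : Fin d → F, ∑ t, x t * x t = 0 → x = 0) :
    (∃ u : V → Fin d → F,
        (∀ v, ∑ t, u v t * u v t ≠ 0) ∧
        ∀ v w, G.Adj v w → ∑ t, u v t * u w t = 0) ↔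
      (∃ w : ({x : V // x ∈ X} ⊕
            {S : Finset V // S ⊆ X ∧ S.card = d ∧ ∃ v, v ∉ X ∧ ∀ s ∈ S, G.Adj v s}) →
            Fin d → F,
        (∀ a, ∑ t, w a t * w a t ≠ 0) ∧
        (∀ x y : {x : V // x ∈ X}, G.Adj x.1 y.1 →
          ∑ t, w (Sum.inl x) t * w (Sum.inl y) t = 0) ∧
        (∀ (x : {x : V // x ∈ X})
            (S : {S : Finset V // S ⊆ X ∧ S.card = d ∧ ∃ v, v ∉ X ∧ ∀ s ∈ S, G.Adj v s}),
          x.1 ∈ S.1 → ∑ t, w (Sum.inl x) t * w (Sum.inr S) t = 0)) := by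
  constructor
  · rintro ⟨u, hu, hadj⟩
    refine ⟨Sum.elim (fun x => u x.1) (fun S => u S.2.2.2.choose), ?_, ?_, ?_⟩
    · rintro (x | S)
      · exact hu x.1
      · exact hu _
    · intro x y h
      exact hadj _ _ h
    · intro x S hxS
      have hv := S.2.2.2.choose_spec
      have h := hadj _ _ (hv.2 x.1 hxS)
      rw [← h]
      exact Finset.sum_congr rfl fun t _ => mul_comm _ _
  · rintro ⟨w, hw, hwX, hwS⟩
    have key : ∀ v : V, v ∉ X → ∃ z : Fin d → F, (∑ t, z t * z t ≠ 0) ∧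
        ∀ x, ∀ hx : x ∈ X, G.Adj v x → ∑ t, w (Sum.inl ⟨x, hx⟩) t * z t = 0 := by
      intro v hv
      set s : Set (Fin d → F) :=
        {p | ∃ x, ∃ hx : x ∈ X, G.Adj v x ∧ w (Sum.inl ⟨x, hx⟩) = p} with hsdef
      by_cases hU : Submodule.span F s = ⊤
      · exfalso
        obtain ⟨t, hts, hspan, hli⟩ := exists_linearIndependent F s
        have htfin : t.Finite := hli.setFinite
        haveI : Fintype t := htfin.fintype
        have hcard : t.toFinset.card = d := by
          have h1 := finrank_span_set_eq_card hli
          rw [hspan, hU, finrank_top, Module.finrank_fin_fun] at h1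
          omega
        have hmem : ∀ p : {p // p ∈ t.toFinset}, ∃ x, ∃ hx : x ∈ X,
            G.Adj v x ∧ w (Sum.inl ⟨x, hx⟩) = p.1 := fun p => hts (Set.mem_toFinset.1 p.2)
        choose g hg hP using hmem
        have hinj : Function.Injective g := by
          intro p q hpq
          have h1 := (hP p).2
          have h2 := (hP q).2
          have hsub : (⟨g p, hg p⟩ : {x : V // x ∈ X}) = ⟨g q, hg q⟩ := Subtype.ext hpq
          apply Subtype.ext
          rw [← h1, ← h2, hsub]
        set S : Finset V := t.toFinset.attach.image g with hS
        have hScard : S.card = d := by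
          rw [hS, Finset.card_image_of_injective _ hinj, Finset.card_attach, hcard]
        have hSX : S ⊆ X := by
          intro x hx
          rw [hS] at hx
          obtain ⟨p, _, rfl⟩ := Finset.mem_image.1 hx
          exact hg p
        have hSadj : ∀ x ∈ S, G.Adj v x := by
          intro x hx
          rw [hS] at hx
          obtain ⟨p, _, rfl⟩ := Finset.mem_image.1 hx
          exact (hP p).1
        set Ssub : {S : Finset V // S ⊆ X ∧ S.card = d ∧ ∃ v, v ∉ X ∧ ∀ s ∈ S, G.Adj v s} :=
          ⟨S, hSX, hScard, v, hv, hSadj⟩ with hSsub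
        set z := w (Sum.inr Ssub) with hzdef
        have hz : ∀ p ∈ t, stdB F d p z = 0 := by
          intro p hpt
          have hp' : p ∈ t.toFinset := Set.mem_toFinset.2 hpt
          have hgx : g ⟨p, hp'⟩ ∈ S := by
            rw [hS]
            exact Finset.mem_image.2 ⟨⟨p, hp'⟩, Finset.mem_attach _ _, rfl⟩
          have h := hwS ⟨g ⟨p, hp'⟩, hg ⟨p, hp'⟩⟩ Ssub hgx
          have h2 : w (Sum.inl ⟨g ⟨p, hp'⟩, hg ⟨p, hp'⟩⟩) = p := (hP ⟨p, hp'⟩).2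
          rw [stdB_apply, ← h2]
          exact h
        have hzspan : ∀ p, stdB F d p z = 0 := by
          intro p
          have hp : p ∈ Submodule.span F t := by rw [hspan, hU]; trivial
          have hle : Submodule.span F t ≤ LinearMap.ker ((stdB F d).flip z) := by
            rw [Submodule.span_le]
            intro q hq
            simpa [LinearMap.mem_ker] using hz q hq
          simpa using hle hp
        exact hw (Sum.inr Ssub) (by rw [← hzdef, ← stdB_apply]; exact hzspan z)
      · obtain ⟨z, hz1, hz2⟩ := aux_exists hF s hU
        exact ⟨z, hz1, fun x hx hadj => hz2 _ ⟨x, hx, hadj, rfl⟩⟩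
    choose z hz1 hz2 using key
    refine ⟨fun v => if h : v ∈ X then w (Sum.inl ⟨v, h⟩) else z v h, ?_, ?_⟩
    · intro v
      by_cases h : v ∈ X
      · simpa [h] using hw (Sum.inl ⟨v, h⟩)
      · simpa [h] using hz1 v h
    · intro a b hab
      by_cases ha : a ∈ X <;> by_cases hb : b ∈ X
      · simpa [ha, hb] using hwX ⟨a, ha⟩ ⟨b, hb⟩ hab
      · simpa [ha, hb] using hz2 b hb a ha hab.symm
      · have h := hz2 a ha b hb hab
        simp only [ha, hb, dif_pos, dif_neg, not_false_iff]
        rw [← h]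
        exact Finset.sum_congr rfl fun t _ => mul_comm _ _
      · exact absurd (hcover a b hab) (by simp [ha, hb])
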